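/- arXiv:0904.2541 — 3 statements merged into one kernel-verified Lean document; each statement's English description precedes it below -/
import Mathlib

section
/- For every integer n ≥ 3 there exists a binary tree T in which every leaf has depth at least n − 1 such that the n-uniform hypergraph H_T has maximum neighborhood size at most 2^(n-2) + 2^(n-3), i.e. every hyperedge of H_T intersects at most 2^(n-2) + 2^(n-3) other hyperedges. -/
open Finset

/-- A (finite) hypergraph: a vertex set and a family of hyperedges. -/
structure FinHypergraph (α : Type*) where
  V : Finset α
  E : Finset (Finset α)

namespace FinHypergraph

variable {α : Type*} [DecidableEq α]

/-- `H` is an `n`-uniform hypergraph: every hyperedge is an `n`-element subset of `V`. -/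
def IsUniform (H : FinHypergraph α) (n : ℕ) : Prop :=
  (∀ e ∈ H.E, e ⊆ H.V) ∧ (∀ e ∈ H.E, e.card = n)

/-- The degree of a vertex: the number of hyperedges containing it. -/
def degree (H : FinHypergraph α) (v : α) : ℕ :=
  (H.E.filter fun e => v ∈ e).card

/-- The neighborhood size of a hyperedge `e`: the number of hyperedges `e' ≠ e`
meeting `e`. -/
def nbhdSize (H : FinHypergraph α) (e : Finset α) : ℕ :=
  (H.E.filter fun e' => e' ≠ e ∧ (e' ∩ e).Nonempty).card

/-- Maker has a winning pairing strategy on `H`: there are a first vertex `v₀ ∈ V` and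
pairwise disjoint pairs from `V \ {v₀}` covering all but at most one vertex of `V \ {v₀}`,
such that any set consisting of `v₀` together with exactly one vertex from each pair
contains a hyperedge. -/
def MakerPairingWin (H : FinHypergraph α) : Prop :=
  ∃ v₀ ∈ H.V, ∃ P : Finset (Finset α),
    (∀ p ∈ P, p.card = 2 ∧ p ⊆ H.V.erase v₀) ∧
    (∀ p ∈ P, ∀ q ∈ P, p ≠ q → Disjoint p q) ∧
    ((H.V.erase v₀) \ P.sup id).card ≤ 1 ∧
    (∀ S : Finset α, S ⊆ P.sup id → (∀ p ∈ P, (S ∩ p).card = 1) →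
      ∃ e ∈ H.E, e ⊆ insert v₀ S)

/-- Maker has a winning *pure* pairing strategy on `H`: there are pairwise disjoint pairs
of vertices covering all but at most one vertex of `V`, such that any set consisting of
exactly one vertex from each pair contains a hyperedge. -/
def MakerPurePairingWin (H : FinHypergraph α) : Prop :=
  ∃ P : Finset (Finset α),
    (∀ p ∈ P, p.card = 2 ∧ p ⊆ H.V) ∧
    (∀ p ∈ P, ∀ q ∈ P, p ≠ q → Disjoint p q) ∧
    (H.V \ P.sup id).card ≤ 1 ∧
    (∀ S : Finset α, S ⊆ P.sup id → (∀ p ∈ P, (S ∩ p).card = 1) →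
      ∃ e ∈ H.E, e ⊆ S)

end FinHypergraph

/-- A literal: a variable (a natural number) together with a polarity. -/
abbrev Lit : Type := ℕ × Bool

/-- A clause: a finite set of literals. -/
abbrev Clause : Type := Finset Lit

/-- A CNF formula: a finite set of clauses. -/
abbrev CnfFormula : Type := Finset Clause

/-- The literals of a clause are over pairwise distinct variables. -/
def distinctVars (C : Clause) : Prop :=
  ∀ l ∈ C, ∀ l' ∈ C, l.1 = l'.1 → l = l'

/-- A CNF formula is satisfiable if some assignment makes a literal of every clause true. -/
def CnfSatisfiable (F : CnfFormula) : Prop :=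
  ∃ σ : ℕ → Bool, ∀ C ∈ F, ∃ l ∈ C, σ l.1 = l.2

/-- The number of clauses of `F` in which the variable `x` occurs (in either polarity). -/
def varOcc (F : CnfFormula) (x : ℕ) : ℕ :=
  (F.filter fun C => ∃ b : Bool, (x, b) ∈ C).card

/-- The number of clauses of `F` in which the literal `l` occurs. -/
def litOcc (F : CnfFormula) (l : Lit) : ℕ :=
  (F.filter fun C => l ∈ C).card

/-- `F` is a `k`-CNF formula: every clause has exactly `k` literals over distinct variables. -/
def isKCNF (F : CnfFormula) (k : ℕ) : Prop :=
  ∀ C ∈ F, C.card = k ∧ distinctVars C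

/-- The number of clauses of `F` distinct from `C` sharing a variable with `C`. -/
def clauseNbhd (F : CnfFormula) (C : Clause) : ℕ :=
  (F.filter fun D => D ≠ C ∧ ∃ l ∈ C, ∃ b : Bool, (l.1, b) ∈ D).card

/-- The number of distinct variables of `F`. -/
def numVarsCnf (F : CnfFormula) : ℕ := (F.sup fun C => C.image Prod.fst).card

/-- `F` is minimal unsatisfiable. -/
def MinimalUnsat (F : CnfFormula) : Prop :=
  ¬ CnfSatisfiable F ∧ ∀ C ∈ F, CnfSatisfiable (F.erase C)

/-- `F` belongs to MU(1): minimal unsatisfiable with (#clauses) − (#variables) = 1. -/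
def MU1 (F : CnfFormula) : Prop :=
  MinimalUnsat F ∧ F.card = numVarsCnf F + 1

/-- A binary tree: a nonempty, prefix-closed finite set of binary strings in which
every node has either both children or none. -/
def IsBinaryTree (T : Finset (List Bool)) : Prop :=
  T.Nonempty ∧
  (∀ t ∈ T, ∀ s : List Bool, s <+: t → s ∈ T) ∧
  (∀ t ∈ T, (t ++ [false] ∈ T ↔ t ++ [true] ∈ T))

/-- A leaf of the tree `T`: a node with no children. -/
def IsTreeLeaf (T : Finset (List Bool)) (t : List Bool) : Prop :=
  t ∈ T ∧ t ++ [false] ∉ T ∧ t ++ [true] ∉ T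

instance (T : Finset (List Bool)) (t : List Bool) : Decidable (IsTreeLeaf T t) :=
  decidable_of_iff (t ∈ T ∧ t ++ [false] ∉ T ∧ t ++ [true] ∉ T) Iff.rfl

/-- The hyperedges of `H_T`: for each leaf `t` of depth at least `n - 1`, the set of the
`n` nodes on the path of length `n - 1` ending at `t`. -/
def treeEdges (T : Finset (List Bool)) (n : ℕ) : Finset (Finset (List Bool)) :=
  (T.filter fun t => IsTreeLeaf T t ∧ n - 1 ≤ t.length).image
    fun t => (Finset.range n).image fun i => t.take (t.length - i)

/-- The `n`-uniform hypergraph `H_T` associated with a binary tree `T`. -/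
def treeHypergraph (T : Finset (List Bool)) (n : ℕ) : FinHypergraph (List Bool) :=
  ⟨T, treeEdges T n⟩


namespace TreeAux
set_option linter.unusedSectionVars false

open Finset List

/-- All boolean lists of length `m`. -/
def allB : ℕ → Finset (List Bool)
  | 0 => {([] : List Bool)}
  | m+1 => (allB m).biUnion fun s => {false :: s, true :: s}

lemma mem_allB : ∀ {m : ℕ} {s : List Bool}, s ∈ allB m ↔ s.length = m
  | 0, s => by simp [allB, List.length_eq_zero_iff]
  | (m+1), s => by
      simp only [allB, Finset.mem_biUnion, Finset.mem_insert, Finset.mem_singleton]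
      constructor
      · rintro ⟨a, ha, rfl | rfl⟩ <;> simp [mem_allB.mp ha]
      · intro hs
        match s, hs with
        | c :: a, hs =>
          refine ⟨a, mem_allB.mpr (by simpa using hs), ?_⟩
          cases c <;> simp

lemma card_allB (m : ℕ) : (allB m).card ≤ 2 ^ m := by
  induction m with
  | zero => simp [allB]
  | succ m ih =>
      refine Finset.card_biUnion_le.trans ?_
      calc ∑ s ∈ allB m, ({false :: s, true :: s} : Finset (List Bool)).card
          ≤ ∑ _s ∈ allB m, 2 := by
            refine Finset.sum_le_sum fun s _ => ?_
            exact (Finset.card_insert_le _ _).trans (by simp)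
        _ = (allB m).card * 2 := by rw [Finset.sum_const, smul_eq_mul]
        _ ≤ 2 ^ m * 2 := by exact Nat.mul_le_mul_right 2 ih
        _ = 2 ^ (m+1) := by ring

/-- The leaves: each base leaf extended by all strings of length `m`. -/
def leavesF (L : List (List Bool)) (m : ℕ) : Finset (List Bool) :=
  L.toFinset.biUnion fun t => (allB m).image fun s => t ++ s

lemma mem_leavesF {L : List (List Bool)} {m : ℕ} {y : List Bool} :
    y ∈ leavesF L m ↔ ∃ t ∈ L, ∃ s : List Bool, s.length = m ∧ y = t ++ s := by
  simp only [leavesF, Finset.mem_biUnion, Finset.mem_image, List.mem_toFinset, mem_allB]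
  constructor
  · rintro ⟨t, ht, s, hs, rfl⟩; exact ⟨t, ht, s, hs, rfl⟩
  · rintro ⟨t, ht, s, hs, rfl⟩; exact ⟨t, ht, s, hs, rfl⟩

/-- The prefixes of a list, as a finset. -/
def prefF (x : List Bool) : Finset (List Bool) :=
  (Finset.range (x.length + 1)).image fun i => x.take i

lemma mem_prefF {x u : List Bool} : u ∈ prefF x ↔ u <+: x := by
  simp only [prefF, Finset.mem_image, Finset.mem_range]
  constructor
  · rintro ⟨i, _, rfl⟩; exact List.take_prefix _ _
  · intro h
    exact ⟨u.length, by have := h.length_le; omega, (List.prefix_iff_eq_take.mp h).symm⟩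

/-- The tree: all prefixes of leaves. -/
def nodesF (L : List (List Bool)) (m : ℕ) : Finset (List Bool) :=
  (leavesF L m).biUnion prefF

lemma mem_nodesF {L : List (List Bool)} {m : ℕ} {u : List Bool} :
    u ∈ nodesF L m ↔ ∃ y ∈ leavesF L m, u <+: y := by
  simp only [nodesF, Finset.mem_biUnion, mem_prefF]

lemma prefix_append_le {a b c : List Bool} (h : a <+: b ++ c) (hl : a.length ≤ b.length) :
    a <+: b :=
  List.prefix_of_prefix_length_le h (List.prefix_append b c) hl

section Main

variable (L : List (List Bool)) (n₀ m b₀ : ℕ)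

variable (hanti : ∀ t ∈ L, ∀ t' ∈ L, t <+: t' → t = t')
variable (hsib : ∀ t ∈ L, ∀ i < t.length, ∀ c : Bool, ∃ t' ∈ L, t.take i ++ [c] <+: t')
variable (hlen : ∀ t ∈ L, n₀ - 1 ≤ t.length)

include hanti in
lemma leavesF_isLeaf {y : List Bool} (hy : y ∈ leavesF L m) :
    IsTreeLeaf (nodesF L m) y := by
  obtain ⟨t, htL, s, hs, rfl⟩ := mem_leavesF.mp hy
  have hchild : ∀ c : Bool, t ++ s ++ [c] ∉ nodesF L m := by
    intro c hc
    obtain ⟨w, hw, hpre⟩ := mem_nodesF.mp hc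
    obtain ⟨t', ht'L, s', hs', rfl⟩ := mem_leavesF.mp hw
    have hlen1 : t.length + s.length + 1 ≤ t'.length + s'.length := by
      have := hpre.length_le; simp at this; omega
    have htt' : t <+: t' := by
      have h1 : t <+: t' ++ s' :=
        ((List.prefix_append t s).trans (List.prefix_append _ _)).trans hpre
      exact prefix_append_le h1 (by omega)
    have := hanti t htL t' ht'L htt'
    subst this
    omega
  exact ⟨mem_nodesF.mpr ⟨t ++ s, hy, List.prefix_refl _⟩, hchild false, hchild true⟩

lemma leaf_mem_leavesF {z : List Bool} (hz : IsTreeLeaf (nodesF L m) z) :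
    z ∈ leavesF L m := by
  obtain ⟨hzT, hf, ht⟩ := hz
  obtain ⟨y, hy, hpre⟩ := mem_nodesF.mp hzT
  rcases eq_or_lt_of_le hpre.length_le with heq | hlt
  · rwa [hpre.eq_of_length heq]
  · exfalso
    have hcp : z ++ [y.get ⟨z.length, hlt⟩] <+: y := by
      have h1 : z = y.take z.length := List.prefix_iff_eq_take.mp hpre
      have h2 : y.take (z.length + 1) = y.take z.length ++ [y.get ⟨z.length, hlt⟩] := by
        rw [List.take_succ, List.getElem?_eq_getElem hlt]
        rfl
      have h3 : z ++ [y.get ⟨z.length, hlt⟩] = y.take (z.length + 1) := by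
        rw [h2, ← h1]
      rw [h3]; exact List.take_prefix _ _
    have hmem : z ++ [y.get ⟨z.length, hlt⟩] ∈ nodesF L m := mem_nodesF.mpr ⟨y, hy, hcp⟩
    cases hb : y.get ⟨z.length, hlt⟩
    · exact hf (by rwa [hb] at hmem)
    · exact ht (by rwa [hb] at hmem)

include hlen in
lemma leaf_length {z : List Bool} (hz : z ∈ leavesF L m) : (n₀ + m) - 1 ≤ z.length := by
  obtain ⟨t, htL, s, hs, rfl⟩ := mem_leavesF.mp hz
  have := hlen t htL
  simp only [List.length_append]
  omega

include hsib in
lemma child_swap (u : List Bool) (c d : Bool) (h : u ++ [c] ∈ nodesF L m) :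
    u ++ [d] ∈ nodesF L m := by
  rw [mem_nodesF] at h ⊢
  obtain ⟨y, hy, hpre⟩ := h
  obtain ⟨t, htL, s, hs, rfl⟩ := mem_leavesF.mp hy
  by_cases hlt : u.length < t.length
  · have hut : u <+: t := by
      have h1 : u <+: t ++ s := (List.prefix_append u [c]).trans hpre
      exact prefix_append_le h1 (by omega)
    have hu : u = t.take u.length := List.prefix_iff_eq_take.mp hut
    obtain ⟨t', ht'L, hpre'⟩ := hsib t htL u.length hlt d
    refine ⟨t' ++ List.replicate m false, mem_leavesF.mpr ⟨t', ht'L, _, by simp, rfl⟩, ?_⟩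
    rw [show t.take u.length = u from hu.symm] at hpre'
    exact hpre'.trans (List.prefix_append _ _)
  · push_neg at hlt
    have htu : t <+: u := by
      have h1 : t <+: u ++ [c] :=
        List.prefix_of_prefix_length_le (List.prefix_append t s) hpre
          (by simp; omega)
      exact prefix_append_le h1 hlt
    have hu : u = t ++ u.drop t.length := by
      conv_lhs => rw [← List.take_append_drop t.length u]
      rw [← List.prefix_iff_eq_take.mp htu]
    set u' := u.drop t.length with hu'
    have hpre2 : u' ++ [c] <+: s := by
      have : t ++ (u' ++ [c]) <+: t ++ s := by
        rw [← List.append_assoc, ← hu]; exact hpre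
      exact (List.prefix_append_right_inj t).mp this
    have hlen2 : u'.length + 1 ≤ m := by
      have := hpre2.length_le; simpa [hs] using this
    refine ⟨t ++ (u' ++ [d] ++ List.replicate (m - (u'.length + 1)) false),
      mem_leavesF.mpr ⟨t, htL, _, by simp; omega, rfl⟩, ?_⟩
    have : u ++ [d] = t ++ (u' ++ [d]) := by rw [hu, List.append_assoc]
    rw [this]
    exact (List.prefix_append_right_inj t).mpr (List.prefix_append _ _)

include hanti hsib in
lemma isBinaryTree (hne : L ≠ []) : IsBinaryTree (nodesF L m) := by
  refine ⟨?_, ?_, ?_⟩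
  · obtain ⟨t, htL⟩ := List.exists_mem_of_ne_nil L hne
    exact ⟨[], mem_nodesF.mpr ⟨t ++ List.replicate m false,
      mem_leavesF.mpr ⟨t, htL, _, by simp, rfl⟩, List.nil_prefix⟩⟩
  · intro t ht s hs
    obtain ⟨y, hy, hpre⟩ := mem_nodesF.mp ht
    exact mem_nodesF.mpr ⟨y, hy, hs.trans hpre⟩
  · intro t _
    exact ⟨fun h => child_swap L m hsib t false true h,
      fun h => child_swap L m hsib t true false h⟩

include hanti hlen in
lemma filter_eq :
    (nodesF L m).filter
        (fun z => IsTreeLeaf (nodesF L m) z ∧ (n₀ + m) - 1 ≤ z.length) =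
      leavesF L m := by
  ext z
  simp only [Finset.mem_filter]
  constructor
  · rintro ⟨_, hleaf, _⟩
    exact leaf_mem_leavesF L m hleaf
  · intro hz
    exact ⟨mem_nodesF.mpr ⟨z, hz, List.prefix_refl _⟩,
      leavesF_isLeaf L m hanti hz, leaf_length L n₀ m hlen hz⟩

/-- the edge associated with a leaf -/
def edgeF (n : ℕ) (x : List Bool) : Finset (List Bool) :=
  (Finset.range n).image fun i => x.take (x.length - i)

include hanti in
lemma cross_cond {t t' s s' : List Bool}
    (htL : t ∈ L) (ht'L : t' ∈ L) (htt' : t' ≠ t)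
    (hltn : n₀ - 1 ≤ t.length) (hltn' : n₀ - 1 ≤ t'.length)
    (hs : s.length = m) (hs' : s'.length = m)
    (hcap : ((edgeF (n₀ + m) (t' ++ s')) ∩ (edgeF (n₀ + m) (t ++ s))).Nonempty) :
    t'.take (max t.length t'.length - (n₀ - 1)) =
      t.take (max t.length t'.length - (n₀ - 1)) := by
  obtain ⟨z, hz⟩ := hcap
  rw [Finset.mem_inter] at hz
  obtain ⟨hz1, hz2⟩ := hz
  simp only [edgeF, Finset.mem_image, Finset.mem_range] at hz1 hz2
  obtain ⟨j, hj, hzy⟩ := hz1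
  obtain ⟨i, hi, hzx⟩ := hz2
  set x := t ++ s with hx
  set y := t' ++ s' with hy
  have hxl : x.length = t.length + m := by rw [hx]; simp [hs]
  have hyl : y.length = t'.length + m := by rw [hy]; simp [hs']
  set ℓ := z.length with hℓ
  have hℓx : ℓ = x.length - i := by
    rw [hℓ, ← hzx, List.length_take]; omega
  have hℓy : ℓ = y.length - j := by
    rw [hℓ, ← hzy, List.length_take]; omega
  set r := max t.length t'.length - (n₀ - 1) with hr
  have hmax1 := le_max_left t.length t'.length
  have hmax2 := le_max_right t.length t'.length
  rcases max_choice t.length t'.length with hM | hM <;> rw [hM] at hr hmax1 hmax2 <;>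
  [skip; skip] <;> try clear hM
  all_goals (
  have hrℓ : r ≤ ℓ := by omega
  have hxr : x.take r = y.take r := by
    have e1 : x.take r = (x.take ℓ).take r := by
      rw [List.take_take, min_eq_left hrℓ]
    have e2 : y.take r = (y.take ℓ).take r := by
      rw [List.take_take, min_eq_left hrℓ]
    have hxz : x.take ℓ = z := by rw [hℓx]; exact hzx
    have hyz : y.take ℓ = z := by rw [hℓy]; exact hzy
    rw [e1, e2, hxz, hyz]
  have hrt : r ≤ t.length := by
    by_contra hcon
    push_neg at hcon
    have hrt' : r ≤ t'.length := by omega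
    have h1 : t <+: x.take r := by
      rw [hx, List.take_append]
      have : t.take r = t := List.take_of_length_le (by omega)
      rw [this]
      exact List.prefix_append _ _
    have h2 : t <+: t' := by
      have h3 : t <+: y := (hxr ▸ h1).trans (List.take_prefix r y)
      rw [hy] at h3
      exact prefix_append_le h3 (by omega)
    exact htt' (hanti t htL t' ht'L h2).symm
  have hrt' : r ≤ t'.length := by
    by_contra hcon
    push_neg at hcon
    have h1 : t' <+: y.take r := by
      rw [hy, List.take_append]
      have : t'.take r = t' := List.take_of_length_le (by omega)
      rw [this]
      exact List.prefix_append _ _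
    have h2 : t' <+: t := by
      have h3 : t' <+: x := (hxr.symm ▸ h1).trans (List.take_prefix r x)
      rw [hx] at h3
      exact prefix_append_le h3 (by omega)
    exact htt' (hanti t' ht'L t htL h2)
  have ex : x.take r = t.take r := by
    rw [hx, List.take_append]
    have : r - t.length = 0 := by omega
    rw [this]
    simp
  have ey : y.take r = t'.take r := by
    rw [hy, List.take_append]
    have : r - t'.length = 0 := by omega
    rw [this]
    simp
  rw [← ex, ← ey, hxr])

end Main

lemma nbhd_bound (L : List (List Bool)) (n₀ m b₀ : ℕ)
    (hanti : ∀ t ∈ L, ∀ t' ∈ L, t <+: t' → t = t')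
    (hlen : ∀ t ∈ L, n₀ - 1 ≤ t.length)
    (hnbhd : ∀ t ∈ L, ((L.toFinset.erase t).filter (fun t' =>
        t'.take (max t.length t'.length - (n₀-1)) =
          t.take (max t.length t'.length - (n₀-1)))).card ≤ b₀)
    {x : List Bool} (hx : x ∈ leavesF L m) :
    ((leavesF L m).filter (fun y => edgeF (n₀+m) y ≠ edgeF (n₀+m) x ∧
      ((edgeF (n₀+m) y) ∩ (edgeF (n₀+m) x)).Nonempty)).card ≤ (b₀+1) * 2^m - 1 := by
  obtain ⟨t, htL, s, hs, rfl⟩ := mem_leavesF.mp hx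
  set N : Finset (List Bool) := (L.toFinset.erase t).filter (fun t' =>
      t'.take (max t.length t'.length - (n₀-1)) =
        t.take (max t.length t'.length - (n₀-1))) with hN
  set G : Finset (List Bool) := insert t N with hG
  set U : Finset (List Bool) := G.biUnion (fun t' => (allB m).image (t' ++ ·)) with hU
  have hxU : t ++ s ∈ U := Finset.mem_biUnion.mpr
    ⟨t, Finset.mem_insert_self _ _, Finset.mem_image.mpr ⟨s, mem_allB.mpr hs, rfl⟩⟩
  have hsub : ((leavesF L m).filter (fun y => edgeF (n₀+m) y ≠ edgeF (n₀+m) (t ++ s) ∧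
      ((edgeF (n₀+m) y) ∩ (edgeF (n₀+m) (t ++ s))).Nonempty)) ⊆ U.erase (t ++ s) := by
    intro y hy
    rw [Finset.mem_filter] at hy
    obtain ⟨hyL, hne', hcap⟩ := hy
    obtain ⟨t', ht'L, s', hs', rfl⟩ := mem_leavesF.mp hyL
    refine Finset.mem_erase.mpr ⟨fun h => hne' (by rw [h]), ?_⟩
    by_cases hteq : t' = t
    · subst hteq
      exact Finset.mem_biUnion.mpr ⟨t', Finset.mem_insert_self _ _,
        Finset.mem_image.mpr ⟨s', mem_allB.mpr hs', rfl⟩⟩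
    · have hcond := cross_cond L n₀ m hanti htL ht'L hteq (hlen t htL) (hlen t' ht'L)
        hs hs' hcap
      refine Finset.mem_biUnion.mpr ⟨t', ?_, Finset.mem_image.mpr ⟨s', mem_allB.mpr hs', rfl⟩⟩
      exact Finset.mem_insert.mpr (Or.inr (Finset.mem_filter.mpr
        ⟨Finset.mem_erase.mpr ⟨hteq, List.mem_toFinset.mpr ht'L⟩, hcond⟩))
  have hUcard : U.card ≤ (b₀+1) * 2^m := by
    refine Finset.card_biUnion_le.trans ?_
    calc ∑ t' ∈ G, ((allB m).image (t' ++ ·)).card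
        ≤ ∑ _t' ∈ G, 2^m := Finset.sum_le_sum fun t' _ =>
          Finset.card_image_le.trans (card_allB m)
      _ = G.card * 2^m := by rw [Finset.sum_const, smul_eq_mul]
      _ ≤ (b₀+1) * 2^m := by
          refine Nat.mul_le_mul_right _ ?_
          refine (Finset.card_insert_le _ _).trans ?_
          have h := hnbhd t htL
          rw [hN]
          omega
  calc ((leavesF L m).filter _).card ≤ (U.erase (t ++ s)).card := Finset.card_le_card hsub
    _ = U.card - 1 := Finset.card_erase_of_mem hxU
    _ ≤ (b₀+1) * 2^m - 1 := Nat.sub_le_sub_right hUcard 1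

lemma master (L : List (List Bool)) (n₀ m b₀ : ℕ)
    (hne : L ≠ [])
    (hanti : ∀ t ∈ L, ∀ t' ∈ L, t <+: t' → t = t')
    (hsib : ∀ t ∈ L, ∀ i < t.length, ∀ c : Bool, ∃ t' ∈ L, t.take i ++ [c] <+: t')
    (hlen : ∀ t ∈ L, n₀ - 1 ≤ t.length)
    (hnbhd : ∀ t ∈ L, ((L.toFinset.erase t).filter (fun t' =>
        t'.take (max t.length t'.length - (n₀-1)) =
          t.take (max t.length t'.length - (n₀-1)))).card ≤ b₀) :
    IsBinaryTree (nodesF L m) ∧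
    (∀ t : List Bool, IsTreeLeaf (nodesF L m) t → (n₀ + m) - 1 ≤ t.length) ∧
    (∀ e ∈ (treeHypergraph (nodesF L m) (n₀ + m)).E,
      (treeHypergraph (nodesF L m) (n₀ + m)).nbhdSize e ≤ (b₀+1) * 2^m - 1) := by
  classical
  refine ⟨isBinaryTree L m hanti hsib hne, ?_, ?_⟩
  · intro z hz
    exact leaf_length L n₀ m hlen (leaf_mem_leavesF L m hz)
  · have hE : (treeHypergraph (nodesF L m) (n₀ + m)).E =
        (leavesF L m).image (fun x => edgeF (n₀ + m) x) := by
      show treeEdges (nodesF L m) (n₀ + m) = _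
      unfold treeEdges
      rw [filter_eq L n₀ m hanti hlen]
      rfl
    intro e he
    rw [hE] at he
    obtain ⟨x, hxL, rfl⟩ := Finset.mem_image.mp he
    show ((treeHypergraph (nodesF L m) (n₀ + m)).E.filter
      (fun e' => e' ≠ edgeF (n₀+m) x ∧ (e' ∩ edgeF (n₀+m) x).Nonempty)).card ≤ _
    rw [hE, Finset.filter_image]
    exact Finset.card_image_le.trans (nbhd_bound L n₀ m b₀ hanti hlen hnbhd hxL)

end TreeAux

def L3 : List (List Bool) := [[false,false],[false,true],[true,false],[true,true]]

def L4 : List (List Bool) := [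
  [false,false,false,false,false,false,false,false,false],
  [false,false,false,false,false,false,false,false,true],
  [false,false,false,false,false,false,false,true],
  [false,false,false,false,false,false,true],
  [false,false,false,false,false,true],
  [false,false,false,false,true],
  [false,false,false,true,false,false,false,false,false],
  [false,false,false,true,false,false,false,false,true],
  [false,false,false,true,false,false,false,true],
  [false,false,false,true,false,false,true],
  [false,false,false,true,false,true],
  [false,false,false,true,true],
  [false,false,true],
  [false,true,false,false,false,false,false,false],
  [false,true,false,false,false,false,false,true],
  [false,true,false,false,false,false,true],
  [false,true,false,false,false,true],
  [false,true,false,false,true],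
  [false,true,false,true],
  [false,true,true,false,false,false,false,false],
  [false,true,true,false,false,false,false,true],
  [false,true,true,false,false,false,true],
  [false,true,true,false,false,true],
  [false,true,true,false,true],
  [false,true,true,true],
  [true,false,false,false,false,false,false,false,false],
  [true,false,false,false,false,false,false,false,true],
  [true,false,false,false,false,false,false,true],
  [true,false,false,false,false,false,true],
  [true,false,false,false,false,true],
  [true,false,false,false,true],
  [true,false,false,true,false,false,false,false,false],
  [true,false,false,true,false,false,false,false,true],
  [true,false,false,true,false,false,false,true],
  [true,false,false,true,false,false,true],
  [true,false,false,true,false,true],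
  [true,false,false,true,true],
  [true,false,true],
  [true,true,false,false,false,false,false,false],
  [true,true,false,false,false,false,false,true],
  [true,true,false,false,false,false,true],
  [true,true,false,false,false,true],
  [true,true,false,false,true],
  [true,true,false,true],
  [true,true,true,false,false,false,false,false],
  [true,true,true,false,false,false,false,true],
  [true,true,true,false,false,false,true],
  [true,true,true,false,false,true],
  [true,true,true,false,true],
  [true,true,true,true]]


/-- For every `n ≥ 3` there is a binary tree `T`, all of whose leaves have depth at least
`n - 1`, such that the `n`-uniform hypergraph `H_T` has maximum neighborhood size at most
`2^(n-2) + 2^(n-3)`. -/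
theorem tree_with_small_max_neighborhood (n : ℕ) (hn : 3 ≤ n) :
    ∃ T : Finset (List Bool), IsBinaryTree T ∧
      (∀ t : List Bool, IsTreeLeaf T t → n - 1 ≤ t.length) ∧
      (∀ e ∈ (treeHypergraph T n).E,
        (treeHypergraph T n).nbhdSize e ≤ 2 ^ (n - 2) + 2 ^ (n - 3)) := by
  classical
  rcases Nat.lt_or_ge n 4 with h4 | h4
  · have hn3 : n = 3 := by omega
    subst hn3
    have M := TreeAux.master L3 3 0 3 (by decide) (by decide) (by decide) (by decide)
      (by decide)
    refine ⟨TreeAux.nodesF L3 0, M.1, M.2.1, fun e he => (M.2.2 e he).trans (by norm_num)⟩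
  · obtain ⟨m, rfl⟩ : ∃ m, n = 4 + m := ⟨n - 4, by omega⟩
    have M := TreeAux.master L4 4 m 5 (by decide) (by decide) (by decide) (by decide)
      (by decide)
    refine ⟨TreeAux.nodesF L4 m, M.1, M.2.1, fun e he => (M.2.2 e he).trans ?_⟩
    have e1 : (2:ℕ) ^ (4 + m - 2) = 4 * 2 ^ m := by
      rw [show 4 + m - 2 = m + 2 by omega, pow_add]; ring
    have e2 : (2:ℕ) ^ (4 + m - 3) = 2 * 2 ^ m := by
      rw [show 4 + m - 3 = m + 1 by omega, pow_add]; ring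
    have h2m : 0 < 2 ^ m := Nat.pow_pos (n := m) (by norm_num)
    omega
end

section
/- If there exists a (k,s)-hypergraph, i.e. a k-uniform hypergraph with maximum degree at most s on which Maker has a winning pairing strategy, then there exists a k-uniform hypergraph H with maximum degree at most s on which Maker has a winning pure pairing strategy, i.e. there is a family of pairwise disjoint two-element subsets (pairs) of the vertex set of H covering all but at most one vertex, such that every set of vertices containing exactly one vertex from each pair contains a hyperedge of H. -/
open Finset

/-- If there is a `(k,s)`-hypergraph (a `k`-uniform hypergraph with maximum degree at
most `s` on which Maker has a winning pairing strategy), then there is a `k`-uniform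
hypergraph with maximum degree at most `s` on which Maker has a winning *pure* pairing
strategy. -/
theorem pairing_to_pure_pairing {α : Type*} [DecidableEq α] (k s : ℕ)
    (H : FinHypergraph α) (hU : H.IsUniform k) (hdeg : ∀ v : α, H.degree v ≤ s)
    (hwin : H.MakerPairingWin) :
    ∃ H' : FinHypergraph (α × Bool), H'.IsUniform k ∧
      (∀ v : α × Bool, H'.degree v ≤ s) ∧
      H'.MakerPurePairingWin := by
  classical
  obtain ⟨v₀, hv₀, P, hP2, hPdisj, hPcov, hPwin⟩ := hwin
  set f : Bool → α → α × Bool := fun b x => (x, b) with hf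
  have hfinj : ∀ b : Bool, Function.Injective (f b) := by
    intro b x y h; simpa [hf] using h
  set H' : FinHypergraph (α × Bool) :=
    ⟨H.V ×ˢ Finset.univ,
      (H.E.image fun e => e.image (f false)) ∪ (H.E.image fun e => e.image (f true))⟩
    with hH'
  have hE' : ∀ e' ∈ H'.E, ∃ b : Bool, ∃ e ∈ H.E, e' = e.image (f b) := by
    intro e' he'
    simp only [hH', mem_union, mem_image] at he'
    rcases he' with ⟨e, he, rfl⟩ | ⟨e, he, rfl⟩
    · exact ⟨false, e, he, rfl⟩
    · exact ⟨true, e, he, rfl⟩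
  refine ⟨H', ?_, ?_, ?_⟩
  · constructor
    · intro e' he'
      obtain ⟨b, e, he, rfl⟩ := hE' e' he'
      intro x hx
      simp only [mem_image] at hx
      obtain ⟨y, hy, rfl⟩ := hx
      simp [hH', hf, hU.1 e he hy]
    · intro e' he'
      obtain ⟨b, e, he, rfl⟩ := hE' e' he'
      rw [Finset.card_image_of_injective _ (hfinj b)]
      exact hU.2 e he
  · rintro ⟨v, b⟩
    have hsub : H'.E.filter (fun e' => (v, b) ∈ e') ⊆
        (H.E.filter fun e => v ∈ e).image (fun e => e.image (f b)) := by
      intro e' he'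
      rw [mem_filter] at he'
      obtain ⟨c, e, he, rfl⟩ := hE' e' he'.1
      have hv : (v, b) ∈ e.image (f c) := he'.2
      simp only [mem_image, hf, Prod.mk.injEq] at hv
      obtain ⟨y, hy, rfl, rfl⟩ := hv
      exact mem_image_of_mem _ (mem_filter.2 ⟨he, hy⟩)
    calc H'.degree (v, b) ≤ ((H.E.filter fun e => v ∈ e).image (fun e => e.image (f b))).card :=
          Finset.card_le_card hsub
      _ ≤ (H.E.filter fun e => v ∈ e).card := Finset.card_image_le
      _ ≤ s := hdeg v
  · -- pure pairing win
    set D : Finset α := insert v₀ ((H.V.erase v₀) \ P.sup id) with hD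
    set P' : Finset (Finset (α × Bool)) :=
      ((P.image fun p => p.image (f false)) ∪ (P.image fun p => p.image (f true))) ∪
        (D.image fun x => {(x, false), (x, true)}) with hP'
    have hmemP' : ∀ q ∈ P', (∃ b : Bool, ∃ p ∈ P, q = p.image (f b)) ∨
        ∃ x ∈ D, q = {(x, false), (x, true)} := by
      intro q hq
      simp only [hP', mem_union, mem_image] at hq
      rcases hq with (⟨p, hp, rfl⟩ | ⟨p, hp, rfl⟩) | ⟨x, hx, rfl⟩
      · exact Or.inl ⟨false, p, hp, rfl⟩
      · exact Or.inl ⟨true, p, hp, rfl⟩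
      · exact Or.inr ⟨x, hx, rfl⟩
    have hDV : D ⊆ H.V := by
      intro x hx
      rw [hD, mem_insert] at hx
      rcases hx with rfl | hx
      · exact hv₀
      · exact mem_of_mem_erase (mem_sdiff.1 hx).1
    have hDnsup : ∀ x ∈ D, x ∉ P.sup id := by
      intro x hx hxs
      rw [hD, mem_insert] at hx
      rcases hx with rfl | hx
      · obtain ⟨p, hp, hxp⟩ := mem_sup.1 hxs
        exact absurd ((hP2 p hp).2 hxp) (by simp)
      · exact (mem_sdiff.1 hx).2 hxs
    have hpairne : ∀ x : α, ({(x, false), (x, true)} : Finset (α × Bool)).card = 2 := by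
      intro x; rw [card_insert_of_notMem (by simp), card_singleton]
    refine ⟨P', ?_, ?_, ?_, ?_⟩
    · intro q hq
      rcases hmemP' q hq with ⟨b, p, hp, rfl⟩ | ⟨x, hx, rfl⟩
      · refine ⟨by rw [Finset.card_image_of_injective _ (hfinj b)]; exact (hP2 p hp).1, ?_⟩
        intro y hy
        simp only [mem_image] at hy
        obtain ⟨z, hz, rfl⟩ := hy
        simp [hH', hf, mem_of_mem_erase ((hP2 p hp).2 hz)]
      · refine ⟨hpairne x, ?_⟩
        intro y hy
        simp only [mem_insert, mem_singleton] at hy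
        rcases hy with rfl | rfl <;> simp [hH', hDV hx]
    · -- pairwise disjoint
      intro q hq r hr hqr
      rcases hmemP' q hq with ⟨b, p, hp, rfl⟩ | ⟨x, hx, rfl⟩ <;>
        rcases hmemP' r hr with ⟨c, p', hp', rfl⟩ | ⟨y, hy, rfl⟩
      · by_cases hbc : b = c
        · subst hbc
          have hpp' : p ≠ p' := fun h => hqr (by rw [h])
          rw [Finset.disjoint_image (hfinj b)]
          exact hPdisj p hp p' hp' hpp'
        · rw [Finset.disjoint_left]
          rintro ⟨z, d⟩ hz hz'
          simp only [mem_image, hf, Prod.mk.injEq] at hz hz'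
          obtain ⟨_, _, _, rfl⟩ := hz
          obtain ⟨_, _, _, h2⟩ := hz'
          exact hbc h2.symm
      · rw [Finset.disjoint_left]
        rintro ⟨z, d⟩ hz hz'
        simp only [mem_image, hf, Prod.mk.injEq] at hz
        obtain ⟨w, hw, rfl, rfl⟩ := hz
        simp only [mem_insert, mem_singleton, Prod.mk.injEq] at hz'
        have : w = y := by rcases hz' with ⟨h, _⟩ | ⟨h, _⟩ <;> exact h
        subst this
        exact hDnsup w hy (mem_sup.2 ⟨p, hp, hw⟩)
      · rw [Finset.disjoint_left]
        rintro ⟨z, d⟩ hz hz'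
        simp only [mem_insert, mem_singleton, Prod.mk.injEq] at hz
        have hzx : z = x := by rcases hz with ⟨h, _⟩ | ⟨h, _⟩ <;> exact h
        simp only [mem_image, hf, Prod.mk.injEq] at hz'
        obtain ⟨w, hw, hwz, _⟩ := hz'
        exact hDnsup x hx (mem_sup.2 ⟨p', hp', by rwa [hwz, hzx] at hw⟩)
      · rw [Finset.disjoint_left]
        rintro ⟨z, d⟩ hz hz'
        simp only [mem_insert, mem_singleton, Prod.mk.injEq] at hz hz'
        have hzx : z = x := by rcases hz with ⟨h, _⟩ | ⟨h, _⟩ <;> exact h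
        have hzy : z = y := by rcases hz' with ⟨h, _⟩ | ⟨h, _⟩ <;> exact h
        exact hqr (by rw [← hzx, hzy])
    · -- coverage
      have : H'.V \ P'.sup id = ∅ := by
        rw [Finset.sdiff_eq_empty_iff_subset]
        rintro ⟨x, b⟩ hx
        simp only [hH', mem_product] at hx
        by_cases hxs : x ∈ P.sup id
        · obtain ⟨p, hp, hxp⟩ := mem_sup.1 hxs
          refine mem_sup.2 ⟨p.image (f b), ?_, mem_image_of_mem _ hxp⟩
          simp only [hP', mem_union, mem_image]
          cases b
          · exact Or.inl (Or.inl ⟨p, hp, rfl⟩)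
          · exact Or.inl (Or.inr ⟨p, hp, rfl⟩)
        · have hxD : x ∈ D := by
            rw [hD, mem_insert]
            by_cases hxv : x = v₀
            · exact Or.inl hxv
            · exact Or.inr (mem_sdiff.2 ⟨mem_erase.2 ⟨hxv, hx.1⟩, hxs⟩)
          refine mem_sup.2 ⟨{(x, false), (x, true)}, ?_, ?_⟩
          · simp only [hP', mem_union, mem_image]
            exact Or.inr ⟨x, hxD, rfl⟩
          · cases b <;> simp
      rw [this]; simp
    · -- win condition
      intro S hS hhit
      have hv₀pair : ({(v₀, false), (v₀, true)} : Finset (α × Bool)) ∈ P' := by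
        simp only [hP', mem_union, mem_image]
        exact Or.inr ⟨v₀, by simp [hD], rfl⟩
      have h1 := hhit _ hv₀pair
      obtain ⟨a, ha⟩ := Finset.card_eq_one.1 h1
      have haS : a ∈ S ∧ a ∈ ({(v₀, false), (v₀, true)} : Finset (α × Bool)) := by
        have : a ∈ S ∩ {(v₀, false), (v₀, true)} := ha ▸ mem_singleton_self a
        exact mem_inter.1 this
      obtain ⟨b, hb⟩ : ∃ b : Bool, a = (v₀, b) := by
        have := haS.2
        simp only [mem_insert, mem_singleton] at this
        rcases this with rfl | rfl
        · exact ⟨false, rfl⟩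
        · exact ⟨true, rfl⟩
      subst hb
      set T : Finset α := (P.sup id).filter (fun x => (x, b) ∈ S) with hT
      have hT1 : T ⊆ P.sup id := filter_subset _ _
      have hT2 : ∀ p ∈ P, (T ∩ p).card = 1 := by
        intro p hp
        have hp' : p.image (f b) ∈ P' := by
          simp only [hP', mem_union, mem_image]
          cases b
          · exact Or.inl (Or.inl ⟨p, hp, rfl⟩)
          · exact Or.inl (Or.inr ⟨p, hp, rfl⟩)
        have h2 := hhit _ hp'
        have himg : (T ∩ p).image (f b) = S ∩ p.image (f b) := by
          ext ⟨y, c⟩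
          simp only [mem_image, mem_inter, hT, mem_filter, hf, Prod.mk.injEq]
          constructor
          · rintro ⟨z, ⟨⟨_, hzS⟩, hzp⟩, rfl, rfl⟩
            exact ⟨hzS, z, hzp, rfl, rfl⟩
          · rintro ⟨hyS, z, hzp, rfl, rfl⟩
            exact ⟨z, ⟨⟨mem_sup.2 ⟨p, hp, hzp⟩, hyS⟩, hzp⟩, rfl, rfl⟩
        rw [← Finset.card_image_of_injective (T ∩ p) (hfinj b), himg, h2]
      obtain ⟨e, he, hesub⟩ := hPwin T hT1 hT2
      refine ⟨e.image (f b), ?_, ?_⟩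
      · simp only [hH', mem_union, mem_image]
        cases b
        · exact Or.inl ⟨e, he, rfl⟩
        · exact Or.inr ⟨e, he, rfl⟩
      · intro y hy
        simp only [mem_image, hf] at hy
        obtain ⟨z, hz, rfl⟩ := hy
        have := hesub hz
        rw [mem_insert] at this
        rcases this with rfl | hzT
        · exact haS.1
        · exact (mem_filter.1 hzT).2
end

section
/- Let F be an n-uniform hypergraph with exactly 2r vertices whose maximum degree is at most 2^(n-2)/(e·n), where e denotes Euler's number (e = exp 1). Then for every partition of the vertex set of F into r pairs (v₁,v₁'), …, (v_r,v_r') there exists a proper 2-coloring of the vertices of F (no hyperedge monochromatic) such that v_i and v_i' receive different colors for every i = 1, …, r. -/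
open Finset

namespace LLLAux

variable {β : Type*} [DecidableEq β]

def Ngood (U : Finset β) (S : Finset (Finset β × Finset β)) : ℕ :=
  (U.powerset.filter fun T => ∀ s ∈ S, T ∩ s.1 ≠ s.2).card

def Nbad (U : Finset β) (c : Finset β × Finset β)
    (S : Finset (Finset β × Finset β)) : ℕ :=
  (U.powerset.filter fun T => T ∩ c.1 = c.2 ∧ ∀ s ∈ S, T ∩ s.1 ≠ s.2).card

lemma Ngood_insert (U : Finset β) (c : Finset β × Finset β)
    (S : Finset (Finset β × Finset β)) :
    Ngood U (insert c S) + Nbad U c S = Ngood U S := by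
  classical
  unfold Ngood Nbad
  have h1 : (U.powerset.filter fun T => ∀ s ∈ insert c S, T ∩ s.1 ≠ s.2)
      = (U.powerset.filter fun T => ∀ s ∈ S, T ∩ s.1 ≠ s.2).filter
          fun T => ¬ (T ∩ c.1 = c.2) := by
    rw [Finset.filter_filter]
    apply Finset.filter_congr
    intro T _
    simp only [Finset.forall_mem_insert]
    tauto
  have h2 : (U.powerset.filter fun T => T ∩ c.1 = c.2 ∧ ∀ s ∈ S, T ∩ s.1 ≠ s.2)
      = (U.powerset.filter fun T => ∀ s ∈ S, T ∩ s.1 ≠ s.2).filter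
          fun T => T ∩ c.1 = c.2 := by
    rw [Finset.filter_filter]
    apply Finset.filter_congr
    intro T _
    tauto
  rw [h1, h2, add_comm]
  exact Finset.card_filter_add_card_filter_not _

lemma swap_inter {T c1 F : Finset β} (hF : F ⊆ c1) : ((T \ c1) ∪ F) ∩ c1 = F := by
  ext a
  have h1 : a ∈ F → a ∈ c1 := @hF a
  simp only [Finset.mem_inter, Finset.mem_union, Finset.mem_sdiff]
  tauto

lemma swap_pres {T c1 F s1 : Finset β} (hd : Disjoint s1 c1) (hF : F ⊆ c1) :
    ((T \ c1) ∪ F) ∩ s1 = T ∩ s1 := by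
  ext a
  have h1 : a ∈ s1 → a ∉ c1 := fun hs hc => (Finset.disjoint_left.mp hd) hs hc
  have h2 : a ∈ F → a ∈ c1 := @hF a
  simp only [Finset.mem_inter, Finset.mem_union, Finset.mem_sdiff]
  tauto

lemma swap_core {T c1 F A : Finset β} (hF : F ⊆ c1) (hA : A ⊆ c1) (hT : T ∩ c1 = A) :
    (((T \ c1) ∪ F) \ c1) ∪ A = T := by
  ext a
  have h1 : a ∈ F → a ∈ c1 := @hF a
  have h2 : a ∈ A → a ∈ c1 := @hA a
  have h3 : a ∈ A ↔ a ∈ T ∧ a ∈ c1 := by rw [← hT, Finset.mem_inter]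
  simp only [Finset.mem_union, Finset.mem_sdiff]
  tauto

lemma Nbad_indep (U : Finset β) (c : Finset β × Finset β) (h2 : c.2 ⊆ c.1) (h1 : c.1 ⊆ U)
    (S : Finset (Finset β × Finset β)) (hd : ∀ s ∈ S, Disjoint s.1 c.1) :
    Ngood U S = 2 ^ c.1.card * Nbad U c S := by
  classical
  unfold Ngood Nbad
  set G := U.powerset.filter fun T => ∀ s ∈ S, T ∩ s.1 ≠ s.2 with hG
  have hfib : ∀ T ∈ G, T ∩ c.1 ∈ c.1.powerset := fun T _ => by
    simp [Finset.mem_powerset, Finset.inter_subset_right]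
  rw [Finset.card_eq_sum_card_fiberwise hfib]
  have hmemG : ∀ T, T ∈ G ↔ (T ⊆ U ∧ ∀ s ∈ S, T ∩ s.1 ≠ s.2) := by
    intro T; simp [hG, Finset.mem_filter, Finset.mem_powerset]
  have key : ∀ A ∈ c.1.powerset, (G.filter fun T => T ∩ c.1 = A).card
      = (G.filter fun T => T ∩ c.1 = c.2).card := by
    intro A hA
    rw [Finset.mem_powerset] at hA
    apply Finset.card_bij' (i := fun T _ => (T \ c.1) ∪ c.2) (j := fun T _ => (T \ c.1) ∪ A)
    · intro T hT
      rw [Finset.mem_filter] at hT ⊢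
      obtain ⟨hTG, hTA⟩ := hT
      rw [hmemG] at hTG ⊢
      refine ⟨⟨?_, ?_⟩, swap_inter h2⟩
      · exact Finset.union_subset ((Finset.sdiff_subset).trans hTG.1) (h2.trans h1)
      · intro s hs; rw [swap_pres (hd s hs) h2]; exact hTG.2 s hs
    · intro T hT
      rw [Finset.mem_filter] at hT ⊢
      obtain ⟨hTG, hTA⟩ := hT
      rw [hmemG] at hTG ⊢
      refine ⟨⟨?_, ?_⟩, swap_inter hA⟩
      · exact Finset.union_subset ((Finset.sdiff_subset).trans hTG.1) (hA.trans h1)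
      · intro s hs; rw [swap_pres (hd s hs) hA]; exact hTG.2 s hs
    · intro T hT
      rw [Finset.mem_filter] at hT
      exact swap_core h2 hA hT.2
    · intro T hT
      rw [Finset.mem_filter] at hT
      exact swap_core hA h2 hT.2
  rw [Finset.sum_congr rfl key, Finset.sum_const, Finset.card_powerset, smul_eq_mul]
  congr 1
  rw [hG, Finset.filter_filter]
  congr 1
  apply Finset.filter_congr
  intro T _
  tauto

lemma Nbad_mono (U : Finset β) (c : Finset β × Finset β)
    {S S' : Finset (Finset β × Finset β)} (h : S' ⊆ S) :
    Nbad U c S ≤ Nbad U c S' := by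
  apply Finset.card_le_card
  apply Finset.monotone_filter_right
  intro T _ hT
  exact ⟨hT.1, fun s hs => hT.2 s (h hs)⟩


lemma lemA (U : Finset β) (C : Finset (Finset β × Finset β)) (x : ℝ)
    (hx0 : 0 < x) (hx1 : x < 1)
    (hsub : ∀ c ∈ C, c.2 ⊆ c.1 ∧ c.1 ⊆ U)
    (hnum : ∀ c ∈ C,
      (1:ℝ) ≤ x * (1-x) ^ (((C.erase c).filter fun s => ¬ Disjoint s.1 c.1).card)
        * 2 ^ c.1.card) :
    ∀ k : ℕ, ∀ S ⊆ C, S.card = k → ∀ c ∈ C, c ∉ S →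
      (Nbad U c S : ℝ) ≤ x * Ngood U S := by
  intro k
  induction k using Nat.strong_induction_on with
  | _ k IH =>
  intro S hSC hSk c hcC hcS
  classical
  set S1 := S.filter (fun s => ¬ Disjoint s.1 c.1) with hS1
  set S2 := S.filter (fun s => Disjoint s.1 c.1) with hS2
  have hS1S : S1 ⊆ S := Finset.filter_subset _ _
  have hS2S : S2 ⊆ S := Finset.filter_subset _ _
  have hcards : S2.card + S1.card = k := by
    rw [← hSk, hS1, hS2]
    exact Finset.card_filter_add_card_filter_not _
  have hunion : S2 ∪ S1 = S := by
    rw [hS1, hS2]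
    rw [Finset.filter_union_filter_not_eq]
  -- chain lemma
  have chain : ∀ T ⊆ S1, ((1-x) ^ T.card * (Ngood U S2 : ℝ)) ≤ (Ngood U (S2 ∪ T) : ℝ) := by
    intro T
    induction T using Finset.induction_on with
    | empty => intro _; simp
    | @insert a T' ha IH2 =>
      intro hins
      have haS1 : a ∈ S1 := hins (Finset.mem_insert_self a T')
      have hT'S1 : T' ⊆ S1 := (Finset.subset_insert a T').trans hins
      have hcard' : (S2 ∪ T').card < k := by
        have h1 : T'.card + 1 ≤ S1.card := by
          rw [← Finset.card_insert_of_notMem ha]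
          exact Finset.card_le_card hins
        calc (S2 ∪ T').card ≤ S2.card + T'.card := Finset.card_union_le _ _
          _ < k := by omega
      have hsubC : S2 ∪ T' ⊆ C := Finset.union_subset (hS2S.trans hSC) ((hT'S1.trans hS1S).trans hSC)
      have haC : a ∈ C := hSC (hS1S haS1)
      have hanotin : a ∉ S2 ∪ T' := by
        rw [Finset.mem_union]
        rintro (h | h)
        · rw [hS2, Finset.mem_filter] at h
          rw [hS1, Finset.mem_filter] at haS1
          exact haS1.2 h.2
        · exact ha h
      have hbad := IH _ hcard' (S2 ∪ T') hsubC rfl a haC hanotin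
      have hins2 := Ngood_insert U a (S2 ∪ T')
      have hrw : S2 ∪ insert a T' = insert a (S2 ∪ T') := by
        rw [Finset.union_insert]
      rw [hrw]
      have h3 : ((Ngood U (insert a (S2 ∪ T'))) : ℝ)
          = (Ngood U (S2 ∪ T') : ℝ) - (Nbad U a (S2 ∪ T') : ℝ) := by
        have := hins2
        push_cast [← this]
        ring
      rw [h3]
      have h4 := IH2 hT'S1
      have h5 : ((1-x) * ((1-x) ^ T'.card * (Ngood U S2 : ℝ))) ≤ (1-x) * (Ngood U (S2 ∪ T') : ℝ) := by
        apply mul_le_mul_of_nonneg_left h4 (by linarith)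
      rw [Finset.card_insert_of_notMem ha]
      calc (1-x) ^ (T'.card + 1) * (Ngood U S2 : ℝ)
          = (1-x) * ((1-x) ^ T'.card * (Ngood U S2 : ℝ)) := by ring
        _ ≤ (1-x) * (Ngood U (S2 ∪ T') : ℝ) := h5
        _ ≤ (Ngood U (S2 ∪ T') : ℝ) - (Nbad U a (S2 ∪ T') : ℝ) := by linarith [hbad]
  -- main computation
  have hd2 : ∀ s ∈ S2, Disjoint s.1 c.1 := fun s hs => (Finset.mem_filter.mp hs).2
  have hindep := Nbad_indep U c (hsub c hcC).1 (hsub c hcC).2 S2 hd2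
  have hmono := Nbad_mono U c hS2S
  have hchain := chain S1 (le_refl S1)
  rw [hunion] at hchain
  set g := ((C.erase c).filter fun s => ¬ Disjoint s.1 c.1).card with hg
  have hS1g : S1.card ≤ g := by
    apply Finset.card_le_card
    intro s hs
    rw [hS1, Finset.mem_filter] at hs
    rw [Finset.mem_filter, Finset.mem_erase]
    exact ⟨⟨fun h => hcS (h ▸ hs.1), hSC hs.1⟩, hs.2⟩
  have hpow : (1-x) ^ g ≤ (1-x) ^ S1.card :=
    pow_le_pow_of_le_one (by linarith) (by linarith) hS1g
  have hnc := hnum c hcC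
  have hb0 : (0:ℝ) ≤ (Nbad U c S2 : ℕ) := Nat.cast_nonneg _
  have hind' : (Ngood U S2 : ℝ) = 2 ^ c.1.card * (Nbad U c S2 : ℝ) := by
    push_cast [hindep]; ring
  calc (Nbad U c S : ℝ) ≤ (Nbad U c S2 : ℝ) := by exact_mod_cast hmono
    _ = 1 * (Nbad U c S2 : ℝ) := (one_mul _).symm
    _ ≤ (x * (1-x) ^ g * 2 ^ c.1.card) * (Nbad U c S2 : ℝ) := by
        apply mul_le_mul_of_nonneg_right hnc hb0
    _ ≤ (x * (1-x) ^ S1.card * 2 ^ c.1.card) * (Nbad U c S2 : ℝ) := by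
        apply mul_le_mul_of_nonneg_right _ hb0
        apply mul_le_mul_of_nonneg_right _ (by positivity)
        apply mul_le_mul_of_nonneg_left hpow hx0.le
    _ = x * ((1-x) ^ S1.card * (Ngood U S2 : ℝ)) := by rw [hind']; ring
    _ ≤ x * (Ngood U S : ℝ) := mul_le_mul_of_nonneg_left hchain hx0.le

lemma lll_exists (U : Finset β) (C : Finset (Finset β × Finset β)) (x : ℝ)
    (hx0 : 0 < x) (hx1 : x < 1)
    (hsub : ∀ c ∈ C, c.2 ⊆ c.1 ∧ c.1 ⊆ U)
    (hnum : ∀ c ∈ C,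
      (1:ℝ) ≤ x * (1-x) ^ (((C.erase c).filter fun s => ¬ Disjoint s.1 c.1).card)
        * 2 ^ c.1.card) :
    ∃ T : Finset β, ∀ c ∈ C, T ∩ c.1 ≠ c.2 := by
  classical
  have main : ∀ S, S ⊆ C → ((1-x) ^ S.card * 2 ^ U.card : ℝ) ≤ (Ngood U S : ℝ) := by
    intro S
    induction S using Finset.induction_on with
    | empty =>
      intro _
      simp only [Finset.card_empty, pow_zero, one_mul]
      unfold Ngood
      rw [Finset.filter_true_of_mem (by intro T _; simp)]
      rw [Finset.card_powerset]
      push_cast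
      exact le_rfl
    | @insert c S hc IH2 =>
      intro hins
      have hcC : c ∈ C := hins (Finset.mem_insert_self c S)
      have hSC : S ⊆ C := (Finset.subset_insert c S).trans hins
      have hbad := lemA U C x hx0 hx1 hsub hnum S.card S hSC rfl c hcC hc
      have heq := Ngood_insert U c S
      have h3 : ((Ngood U (insert c S)) : ℝ)
          = (Ngood U S : ℝ) - (Nbad U c S : ℝ) := by
        push_cast [← heq]; ring
      rw [Finset.card_insert_of_notMem hc, h3]
      have h4 := IH2 hSC
      calc (1-x) ^ (S.card + 1) * (2:ℝ) ^ U.card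
          = (1-x) * ((1-x) ^ S.card * 2 ^ U.card) := by ring
        _ ≤ (1-x) * (Ngood U S : ℝ) := by
            apply mul_le_mul_of_nonneg_left h4 (by linarith)
        _ ≤ (Ngood U S : ℝ) - (Nbad U c S : ℝ) := by linarith [hbad]
  have hM := main C (le_refl C)
  have hxp : (0:ℝ) < 1 - x := by linarith
  have hpos : (0:ℝ) < (Ngood U C : ℝ) := lt_of_lt_of_le (by positivity) hM
  have hne : Ngood U C ≠ 0 := by exact_mod_cast hpos.ne'
  have hne2 : (U.powerset.filter fun T => ∀ s ∈ C, T ∩ s.1 ≠ s.2).Nonempty := by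
    rw [← Finset.card_pos]
    exact Nat.pos_of_ne_zero hne
  obtain ⟨T, hT⟩ := hne2
  exact ⟨T, (Finset.mem_filter.mp hT).2⟩

end LLLAux

lemma numericLLL (M : ℝ) (hM : 2 ≤ M) (g : ℕ) (hg : (g:ℝ) ≤ M - 1) :
    Real.exp (-1) ≤ (1 - 1/M) ^ g := by
  have h0 : (0:ℝ) < M := by linarith
  have h1 : (0:ℝ) < M - 1 := by linarith
  have hexp := Real.add_one_le_exp (1/(M-1))
  have hq : (1 - 1/M) * (1 + 1/(M-1)) = 1 := by field_simp; ring
  have hx : (0:ℝ) < 1 - 1/M := by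
    have : 1/M < 1 := by rw [div_lt_one h0]; linarith
    linarith
  have key : Real.exp (-(1/(M-1))) ≤ 1 - 1/M := by
    rw [Real.exp_neg, inv_eq_one_div, div_le_iff₀ (Real.exp_pos _)]
    nlinarith [hexp, hx]
  calc Real.exp (-1) ≤ Real.exp (-((g:ℝ)/(M-1))) := by
        apply Real.exp_le_exp.mpr
        have : (g:ℝ)/(M-1) ≤ 1 := by rw [div_le_one h1]; linarith
        linarith
    _ = (Real.exp (-(1/(M-1)))) ^ g := by
        rw [← Real.exp_nat_mul]
        congr 1
        field_simp
    _ ≤ (1 - 1/M) ^ g := pow_le_pow_left₀ (Real.exp_pos _).le key g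


/-- representative of a pair -/
noncomputable def repv (p : Finset ℕ) : ℕ := if h : p.Nonempty then p.min' h else 0

lemma repv_mem {p : Finset ℕ} (h : p.Nonempty) : repv p ∈ p := by
  rw [repv, dif_pos h]; exact p.min'_mem h

/-- the pairs meeting an edge -/
def Dset (P : Finset (Finset ℕ)) (e : Finset ℕ) : Finset (Finset ℕ) :=
  P.filter fun p => (p ∩ e).Nonempty

/-- the pairs meeting an edge whose representative is in the edge -/
noncomputable def FtSet (P : Finset (Finset ℕ)) (e : Finset ℕ) : Finset (Finset ℕ) :=
  (Dset P e).filter fun p => repv p ∈ e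

/-- the "good" edges: meeting every pair at most once -/
def EgSet (H : FinHypergraph ℕ) (P : Finset (Finset ℕ)) : Finset (Finset ℕ) :=
  H.E.filter fun e => ∀ p ∈ P, (p ∩ e).card ≤ 1

/-- the constraint set -/
noncomputable def CSet (H : FinHypergraph ℕ) (P : Finset (Finset ℕ)) :
    Finset (Finset (Finset ℕ) × Finset (Finset ℕ)) :=
  (EgSet H P).image (fun e => (Dset P e, FtSet P e)) ∪
    (EgSet H P).image (fun e => (Dset P e, Dset P e \ FtSet P e))


/-- Let `H` be an `n`-uniform hypergraph whose vertex set is partitioned into pairs and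
whose maximum degree is at most `2^(n-2)/(e·n)`. Then there is a proper 2-coloring of `H`
in which the two vertices of each pair receive different colors. -/
theorem proper_coloring_respecting_pairing (n : ℕ) (hn : 1 ≤ n) (H : FinHypergraph ℕ)
    (hU : H.IsUniform n)
    (hdeg : ∀ v : ℕ, (H.degree v : ℝ) ≤ 2 ^ (n - 2) / (Real.exp 1 * n))
    (P : Finset (Finset ℕ))
    (hpairs : ∀ p ∈ P, p.card = 2)
    (hdisj : ∀ p ∈ P, ∀ q ∈ P, p ≠ q → Disjoint p q)
    (hcover : P.sup id = H.V) :
    ∃ c : ℕ → Bool,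
      (∀ e ∈ H.E, (∃ v ∈ e, c v = true) ∧ (∃ v ∈ e, c v = false)) ∧
      (∀ p ∈ P, ∀ u ∈ p, ∀ w ∈ p, u ≠ w → c u ≠ c w) := by
  classical
  obtain ⟨hUe, hUc⟩ := hU
  have huniq : ∀ p ∈ P, ∀ q ∈ P, ∀ v : ℕ, v ∈ p → v ∈ q → p = q := by
    intro p hp q hq v hvp hvq
    by_contra h
    exact (Finset.disjoint_left.mp (hdisj p hp q hq h)) hvp hvq
  have hVmem : ∀ v ∈ H.V, ∃ p ∈ P, v ∈ p := by
    intro v hv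
    rw [← hcover] at hv
    simpa using Finset.mem_sup.mp hv
  -- cardinality of Dset for good edges
  have hDcard : ∀ e ∈ EgSet H P, (Dset P e).card = n := by
    intro e he
    rw [EgSet, Finset.mem_filter] at he
    obtain ⟨heE, hle⟩ := he
    have hrep : e = (Dset P e).biUnion (fun p => p ∩ e) := by
      ext v
      constructor
      · intro hv
        obtain ⟨p, hp, hvp⟩ := hVmem v (hUe e heE hv)
        rw [Finset.mem_biUnion]
        exact ⟨p, Finset.mem_filter.mpr ⟨hp, ⟨v, Finset.mem_inter.mpr ⟨hvp, hv⟩⟩⟩,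
          Finset.mem_inter.mpr ⟨hvp, hv⟩⟩
      · intro hv
        obtain ⟨p, _, hvp⟩ := Finset.mem_biUnion.mp hv
        exact (Finset.mem_inter.mp hvp).2
    have hdisj2 : ∀ p ∈ Dset P e, ∀ q ∈ Dset P e, p ≠ q → Disjoint (p ∩ e) (q ∩ e) := by
      intro p hp q hq hpq
      have := hdisj p (Finset.mem_filter.mp hp).1 q (Finset.mem_filter.mp hq).1 hpq
      exact Finset.disjoint_of_subset_left Finset.inter_subset_left
        (Finset.disjoint_of_subset_right Finset.inter_subset_left this)
    have hbu := Finset.card_biUnion hdisj2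
    have hone : ∀ p ∈ Dset P e, (p ∩ e).card = 1 := by
      intro p hp
      rw [Dset, Finset.mem_filter] at hp
      have h1 : 1 ≤ (p ∩ e).card := Finset.card_pos.mpr hp.2
      have h2 := hle p hp.1
      omega
    calc (Dset P e).card = ∑ p ∈ Dset P e, 1 := by rw [Finset.card_eq_sum_ones]
      _ = ∑ p ∈ Dset P e, (p ∩ e).card := (Finset.sum_congr rfl (fun p hp => (hone p hp).symm))
      _ = ((Dset P e).biUnion (fun p => p ∩ e)).card := hbu.symm
      _ = e.card := by rw [← hrep]
      _ = n := hUc e heE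
  -- get a good assignment T
  obtain ⟨T, hT⟩ : ∃ T : Finset (Finset ℕ), ∀ c ∈ CSet H P, T ∩ c.1 ≠ c.2 := by
    by_cases hE : H.E = ∅
    · refine ⟨∅, ?_⟩
      intro c hc
      simp [CSet, EgSet, hE] at hc
    · -- setup for LLL
      obtain ⟨e0, he0⟩ := Finset.nonempty_iff_ne_empty.mpr hE
      have he0n : e0.Nonempty := by
        rw [← Finset.card_pos, hUc e0 he0]; omega
      obtain ⟨v0, hv0⟩ := he0n
      have hdeg1 : 1 ≤ H.degree v0 :=
        Finset.card_pos.mpr ⟨e0, Finset.mem_filter.mpr ⟨he0, hv0⟩⟩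
      have hnR : (0:ℝ) < n := by exact_mod_cast hn
      have hpos0 : (0:ℝ) < Real.exp 1 * n := by positivity
      have hbig : Real.exp 1 * n ≤ 2 ^ (n-2) := by
        have h := hdeg v0
        rw [le_div_iff₀ hpos0] at h
        have h1 : (1:ℝ) ≤ (H.degree v0 : ℝ) := by exact_mod_cast hdeg1
        nlinarith [h, h1, hpos0]
      have hexp1 : (2.7:ℝ) < Real.exp 1 := by
        have := Real.exp_one_gt_d9; linarith
      have hn2 : 2 ≤ n := by
        rcases Nat.lt_or_ge n 2 with hlt | hge
        · exfalso
          have hn1' : n = 1 := by omega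
          rw [hn1'] at hbig
          have h0 : (1-2 : ℕ) = 0 := rfl
          rw [h0, pow_zero, Nat.cast_one, mul_one] at hbig
          linarith
        · exact hge
      have hpow4 : (2:ℝ)^n = 4 * 2^(n-2) := by
        have h : n - 2 + 2 = n := Nat.sub_add_cancel hn2
        calc (2:ℝ)^n = 2^(n-2+2) := by rw [h]
          _ = 4 * 2^(n-2) := by rw [pow_add]; ring
      set M : ℝ := 2^n / Real.exp 1 with hMdef
      have hn1 : (1:ℝ) ≤ (n:ℝ) := by exact_mod_cast hn
      have h2n : (4 * (Real.exp 1 * n)) ≤ 2^n := by linarith [hbig, hpow4]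
      have hM2 : (2:ℝ) ≤ M := by
        rw [hMdef, le_div_iff₀ (Real.exp_pos 1)]
        nlinarith [h2n, hexp1, hn1, Real.exp_pos 1]
      set x : ℝ := Real.exp 1 / 2^n with hxdef
      have h2npos : (0:ℝ) < 2^n := by positivity
      have hx0 : 0 < x := by positivity
      have hxM : x = 1 / M := by rw [hxdef, hMdef, one_div_div]
      have hx1 : x < 1 := by
        rw [hxM, div_lt_one (by linarith)]; linarith
      apply LLLAux.lll_exists P (CSet H P) x hx0 hx1
      · -- hsub
        intro c hc
        rw [CSet, Finset.mem_union] at hc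
        rcases hc with hc | hc <;> obtain ⟨e, he, rfl⟩ := Finset.mem_image.mp hc
        · exact ⟨Finset.filter_subset _ _, Finset.filter_subset _ _⟩
        · exact ⟨Finset.sdiff_subset, Finset.filter_subset _ _⟩
      · -- hnum
        intro c hc
        have hrepc : ∃ e ∈ EgSet H P, c.1 = Dset P e := by
          rw [CSet, Finset.mem_union] at hc
          rcases hc with hc | hc <;> obtain ⟨e, he, rfl⟩ := Finset.mem_image.mp hc <;>
            exact ⟨e, he, rfl⟩
        obtain ⟨e, he, hce⟩ := hrepc
        have hc1card : c.1.card = n := by rw [hce]; exact hDcard e he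
        -- gamma bound
        set γ := ((CSet H P).erase c |>.filter fun s => ¬ Disjoint s.1 c.1).card with hγ
        have hDne : (Dset P e).Nonempty := by
          rw [← Finset.card_pos, hDcard e he]; omega
        have hcQ : c ∈ (CSet H P).filter fun s => ¬ Disjoint s.1 c.1 := by
          rw [Finset.mem_filter]
          refine ⟨hc, ?_⟩
          rw [hce]
          intro hd
          have hd2 := disjoint_self.mp hd
          rw [Finset.bot_eq_empty] at hd2
          rw [hd2] at hDne
          simp at hDne
        have h01 : γ + 1 = ((CSet H P).filter fun s => ¬ Disjoint s.1 c.1).card := by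
          rw [hγ, Finset.filter_erase]
          exact Finset.card_erase_add_one hcQ
        have h02 : ((CSet H P).filter fun s => ¬ Disjoint s.1 c.1).card
            ≤ 2 * ((EgSet H P).filter fun e' => ¬ Disjoint (Dset P e') (Dset P e)).card := by
          rw [CSet, Finset.filter_union]
          refine (Finset.card_union_le _ _).trans ?_
          have heq1 : ((EgSet H P).filter fun a => ¬Disjoint (Dset P a, FtSet P a).1 c.1)
              = (EgSet H P).filter fun e' => ¬ Disjoint (Dset P e') (Dset P e) := by
            apply Finset.filter_congr; intro a _; rw [hce]
          have heq2 : ((EgSet H P).filter fun a => ¬Disjoint (Dset P a, Dset P a \ FtSet P a).1 c.1)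
              = (EgSet H P).filter fun e' => ¬ Disjoint (Dset P e') (Dset P e) := by
            apply Finset.filter_congr; intro a _; rw [hce]
          rw [Finset.filter_image, Finset.filter_image, heq1]
          have hle1 := Finset.card_image_le (s := (EgSet H P).filter
            fun e' => ¬ Disjoint (Dset P e') (Dset P e))
            (f := fun e => (Dset P e, FtSet P e))
          have hle2 := Finset.card_image_le (s := (EgSet H P).filter
            fun e' => ¬ Disjoint (Dset P e') (Dset P e))
            (f := fun e => (Dset P e, Dset P e \ FtSet P e))
          omega
        have h03 : ((EgSet H P).filter fun e' => ¬ Disjoint (Dset P e') (Dset P e)).card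
            ≤ ∑ p ∈ Dset P e, ∑ v ∈ p, H.degree v := by
          have hs1 : ((EgSet H P).filter fun e' => ¬ Disjoint (Dset P e') (Dset P e))
              ⊆ (Dset P e).biUnion fun p => H.E.filter fun e' => (p ∩ e').Nonempty := by
            intro e' he'
            rw [Finset.mem_filter] at he'
            obtain ⟨he'E, hnd⟩ := he'
            obtain ⟨p, hp1, hp2⟩ := Finset.not_disjoint_iff.mp hnd
            rw [Finset.mem_biUnion]
            refine ⟨p, hp2, Finset.mem_filter.mpr ⟨?_, (Finset.mem_filter.mp hp1).2⟩⟩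
            exact Finset.mem_of_mem_filter _ he'E
          refine (Finset.card_le_card hs1).trans ?_
          refine Finset.card_biUnion_le.trans ?_
          apply Finset.sum_le_sum
          intro p _
          have hs2 : (H.E.filter fun e' => (p ∩ e').Nonempty)
              ⊆ p.biUnion fun v => H.E.filter fun e' => v ∈ e' := by
            intro e' he'
            rw [Finset.mem_filter] at he'
            obtain ⟨v, hv⟩ := he'.2
            rw [Finset.mem_biUnion]
            exact ⟨v, (Finset.mem_inter.mp hv).1,
              Finset.mem_filter.mpr ⟨he'.1, (Finset.mem_inter.mp hv).2⟩⟩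
          exact (Finset.card_le_card hs2).trans Finset.card_biUnion_le
        have h04 : ((∑ p ∈ Dset P e, ∑ v ∈ p, H.degree v : ℕ) : ℝ)
            ≤ n * (2 * (2 ^ (n-2) / (Real.exp 1 * n))) := by
          push_cast
          have hstep : ∀ p ∈ Dset P e, (∑ v ∈ p, (H.degree v : ℝ))
              ≤ 2 * (2 ^ (n-2) / (Real.exp 1 * n)) := by
            intro p hp
            have hcp : p.card = 2 := hpairs p (Finset.mem_of_mem_filter _ hp)
            calc (∑ v ∈ p, (H.degree v : ℝ)) ≤ ∑ v ∈ p, (2 ^ (n-2) / (Real.exp 1 * n)) :=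
                Finset.sum_le_sum (fun v _ => hdeg v)
              _ = 2 * (2 ^ (n-2) / (Real.exp 1 * n)) := by
                  rw [Finset.sum_const, hcp]; push_cast; ring
          calc (∑ p ∈ Dset P e, ∑ v ∈ p, (H.degree v : ℝ))
              ≤ ∑ p ∈ Dset P e, (2 * (2 ^ (n-2) / (Real.exp 1 * n))) :=
                Finset.sum_le_sum hstep
            _ = n * (2 * (2 ^ (n-2) / (Real.exp 1 * n))) := by
                rw [Finset.sum_const, hDcard e he]; push_cast; ring
        have hgamR : (γ : ℝ) ≤ M - 1 := by
          have hnat : γ + 1 ≤ 2 * (∑ p ∈ Dset P e, ∑ v ∈ p, H.degree v) := by omega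
          have hR : ((γ:ℝ) + 1) ≤ 2 * ((∑ p ∈ Dset P e, ∑ v ∈ p, H.degree v : ℕ):ℝ) := by
            exact_mod_cast hnat
          have hsimp : 2 * ((n:ℝ) * (2 * (2 ^ (n-2) / (Real.exp 1 * n)))) = M := by
            rw [hMdef, hpow4]
            field_simp
            ring
          linarith [h04]
        -- numeric conclusion
        have hnum0 := numericLLL M hM2 γ hgamR
        rw [← hxM] at hnum0
        rw [hc1card]
        have hxe : x * 2^n = Real.exp 1 := by
          rw [hxdef]; field_simp
        calc (1:ℝ) = Real.exp 1 * Real.exp (-1) := by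
              rw [← Real.exp_add]; norm_num
          _ ≤ Real.exp 1 * (1-x)^γ := by
              apply mul_le_mul_of_nonneg_left hnum0 (Real.exp_pos 1).le
          _ = x * (1-x)^γ * 2^n := by rw [← hxe]; ring
  -- construct the coloring
  set col : ℕ → Bool := fun v => decide (∃ p ∈ P, v ∈ p ∧ ((p ∈ T) ↔ v = repv p)) with hcoldef
  have hcol : ∀ q ∈ P, ∀ v ∈ q, (col v = true ↔ ((q ∈ T) ↔ v = repv q)) := by
    intro q hq v hv
    rw [hcoldef]
    simp only [decide_eq_true_eq]
    constructor
    · rintro ⟨p, hp, hvp, h⟩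
      rwa [huniq p hp q hq v hvp hv] at h
    · intro h; exact ⟨q, hq, hv, h⟩
  have hpc : ∀ p ∈ P, ∀ u ∈ p, ∀ w ∈ p, u ≠ w → col u ≠ col w := by
    intro p hp u hu w hw huw hcc
    have hp2 := hpairs p hp
    have hpn : p.Nonempty := Finset.card_pos.mp (by omega)
    have hr := repv_mem hpn
    have hpuw : p = {u, w} := by
      symm
      apply Finset.eq_of_subset_of_card_le
      · intro z hz
        simp only [Finset.mem_insert, Finset.mem_singleton] at hz
        rcases hz with rfl | rfl
        · exact hu
        · exact hw
      · rw [hp2]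
        rw [Finset.card_insert_of_notMem (by simpa using huw), Finset.card_singleton]
    have hrep2 : repv p = u ∨ repv p = w := by
      have hr2 : repv p ∈ ({u, w} : Finset ℕ) := by rw [← hpuw]; exact hr
      simpa using hr2
    have hcu := hcol p hp u hu
    have hcw := hcol p hp w hw
    rw [hcc] at hcu
    have hiff : ((p ∈ T) ↔ u = repv p) ↔ ((p ∈ T) ↔ w = repv p) := by
      rw [← hcu, ← hcw]
    rcases hrep2 with h | h
    · have h1 : u = repv p := h.symm
      have h2 : ¬ (w = repv p) := fun hh => huw (h1.trans hh.symm)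
      tauto
    · have h1 : w = repv p := h.symm
      have h2 : ¬ (u = repv p) := fun hh => huw (hh.trans h1.symm)
      tauto
  refine ⟨col, ?_, hpc⟩
  intro e he
  by_cases hbigp : ∃ p ∈ P, p ⊆ e
  · obtain ⟨p, hp, hpe⟩ := hbigp
    obtain ⟨u, w, huw, hpuw⟩ := Finset.card_eq_two.mp (hpairs p hp)
    have hu : u ∈ p := by rw [hpuw]; simp
    have hw : w ∈ p := by rw [hpuw]; simp
    have hne := hpc p hp u hu w hw huw
    cases hcu : col u with
    | true =>
      refine ⟨⟨u, hpe hu, hcu⟩, ⟨w, hpe hw, ?_⟩⟩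
      cases hcw : col w with
      | true => exact absurd (hcu.trans hcw.symm) hne
      | false => rfl
    | false =>
      refine ⟨⟨w, hpe hw, ?_⟩, ⟨u, hpe hu, hcu⟩⟩
      cases hcw : col w with
      | true => rfl
      | false => exact absurd (hcu.trans hcw.symm) hne
  · have heg : e ∈ EgSet H P := by
      rw [EgSet, Finset.mem_filter]
      refine ⟨he, ?_⟩
      intro p hp
      by_contra hcon
      push_neg at hcon
      refine hbigp ⟨p, hp, ?_⟩
      have h1 : p ∩ e = p := Finset.eq_of_subset_of_card_le Finset.inter_subset_left
        (by rw [hpairs p hp]; omega)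
      rw [← h1]
      exact Finset.inter_subset_right
    have hcard1 : ∀ p ∈ P, (p ∩ e).card ≤ 1 := (Finset.mem_filter.mp heg).2
    have hT1 := hT _ (Finset.mem_union_left _ (Finset.mem_image_of_mem
      (fun e => (Dset P e, FtSet P e)) heg))
    have hT2 := hT _ (Finset.mem_union_right _ (Finset.mem_image_of_mem
      (fun e => (Dset P e, Dset P e \ FtSet P e)) heg))
    simp only at hT1 hT2
    have hkey : ∀ p ∈ P, ∀ v, v ∈ p → v ∈ e →
        (col v = true ↔ ((p ∈ T) ↔ repv p ∈ e)) := by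
      intro p hp v hvp hve
      rw [hcol p hp v hvp]
      have hone := hcard1 p hp
      have hrme : repv p ∈ p := repv_mem ⟨v, hvp⟩
      have heqc : repv p ∈ e → v = repv p := by
        intro hre
        exact Finset.card_le_one.mp hone v (Finset.mem_inter.mpr ⟨hvp, hve⟩)
          (repv p) (Finset.mem_inter.mpr ⟨hrme, hre⟩)
      constructor
      · intro h
        constructor
        · intro hpt
          rw [← h.mp hpt]; exact hve
        · intro hre
          exact h.mpr (heqc hre)
      · intro h
        constructor
        · intro hpt
          exact heqc (h.mp hpt)
        · intro hveq
          exact h.mpr (hveq ▸ hve)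
    constructor
    · -- ∃ v ∈ e, col v = true
      by_contra hcon
      push_neg at hcon
      have hallf : ∀ v ∈ e, col v = false := by
        intro v hv
        cases hcv : col v with
        | true => exact absurd hcv (hcon v hv)
        | false => rfl
      apply hT2
      ext p
      simp only [Finset.mem_inter, Finset.mem_sdiff, FtSet, Finset.mem_filter]
      have hcore : p ∈ Dset P e → ((p ∈ T) ↔ repv p ∉ e) := by
        intro hpD
        have hpP : p ∈ P := (Finset.mem_filter.mp hpD).1
        obtain ⟨v, hv⟩ := (Finset.mem_filter.mp hpD).2
        have hvp := (Finset.mem_inter.mp hv).1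
        have hve := (Finset.mem_inter.mp hv).2
        have hfalse : ¬ (col v = true) := by rw [hallf v hve]; simp
        rw [hkey p hpP v hvp hve] at hfalse
        tauto
      tauto
    · -- ∃ v ∈ e, col v = false
      by_contra hcon
      push_neg at hcon
      have hallt : ∀ v ∈ e, col v = true := by
        intro v hv
        cases hcv : col v with
        | true => rfl
        | false => exact absurd hcv (hcon v hv)
      apply hT1
      ext p
      simp only [Finset.mem_inter, FtSet, Finset.mem_filter]
      have hcore : p ∈ Dset P e → ((p ∈ T) ↔ repv p ∈ e) := by
        intro hpD
        have hpP : p ∈ P := (Finset.mem_filter.mp hpD).1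
        obtain ⟨v, hv⟩ := (Finset.mem_filter.mp hpD).2
        have hvp := (Finset.mem_inter.mp hv).1
        have hve := (Finset.mem_inter.mp hv).2
        have := (hkey p hpP v hvp hve).mp (hallt v hve)
        exact this
      tauto
end
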